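/- arXiv:2110.15634 — 2 statements merged into one kernel-verified Lean document; each statement's English description precedes it below -/
import Mathlib

section
/- Let X be a nonempty set, let n and d be positive integers, and let g_1, …, g_n : X → ℝ be nonnegative functions such that ∑_{i=1}^n g_i(x) > 0 for every x ∈ X. Define F : X × (0,∞) → ℝ by F(x,C) = (d/2)·log C + (1/(2nC))·∑_{i=1}^n g_i(x). If x_0 minimizes x ↦ ∑_{i=1}^n g_i(x) over X, then the pair (x_0, C_0) with C_0 = (1/(nd))·∑_{i=1}^n g_i(x_0) is a global minimizer of F over X × (0,∞). Conversely, if (x_1, C_1) is a global minimizer of F, then x_1 minimizes x ↦ ∑_{i=1}^n g_i(x) over X and C_1 = (1/(nd))·∑_{i=1}^n g_i(x_1). -/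
lemma val_lem (n d : ℕ) (hn : 0 < n) (hd : 0 < d) {S : ℝ} (hS : 0 < S) :
    (1 / (2 * (n:ℝ) * (1 / ((n:ℝ)*d) * S))) * S = (d:ℝ)/2 := by
  have hn' : ((n:ℝ)) ≠ 0 := Nat.cast_ne_zero.mpr hn.ne'
  have hd' : ((d:ℝ)) ≠ 0 := Nat.cast_ne_zero.mpr hd.ne'
  field_simp

lemma key_lem (n d : ℕ) (hn : 0 < n) (hd : 0 < d) {S C : ℝ} (hS : 0 < S) (hC : 0 < C) :
    ((d:ℝ)/2) * Real.log (1/((n:ℝ)*d) * S) + (d:ℝ)/2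
      ≤ ((d:ℝ)/2) * Real.log C + (1 / (2 * (n:ℝ) * C)) * S := by
  have hn' : (0:ℝ) < n := Nat.cast_pos.mpr hn
  have hd' : (0:ℝ) < d := Nat.cast_pos.mpr hd
  set c : ℝ := 1/((n:ℝ)*d) * S with hc
  have hc0 : 0 < c := by positivity
  have hu : 0 < c / C := by positivity
  have hlog := Real.log_le_sub_one_of_pos hu
  rw [Real.log_div hc0.ne' hC.ne'] at hlog
  have hSc : S = c * ((n:ℝ)*d) := by rw [hc]; field_simp
  have hval : (1 / (2 * (n:ℝ) * C)) * S = (d:ℝ) * c / (2*C) := by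
    rw [hSc]; field_simp
  rw [hval]
  have h2 : ((d:ℝ)/2) * (Real.log c - Real.log C) ≤ ((d:ℝ)/2) * (c/C - 1) := by
    apply mul_le_mul_of_nonneg_left hlog (by positivity)
  have h3 : ((d:ℝ)/2) * (c/C - 1) = (d:ℝ) * c / (2*C) - (d:ℝ)/2 := by
    field_simp
  linarith [h2, h3.symm.le, h3.le]

lemma key_lem_strict (n d : ℕ) (hn : 0 < n) (hd : 0 < d) {S C : ℝ} (hS : 0 < S) (hC : 0 < C)
    (hne : C ≠ 1/((n:ℝ)*d) * S) :
    ((d:ℝ)/2) * Real.log (1/((n:ℝ)*d) * S) + (d:ℝ)/2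
      < ((d:ℝ)/2) * Real.log C + (1 / (2 * (n:ℝ) * C)) * S := by
  have hn' : (0:ℝ) < n := Nat.cast_pos.mpr hn
  have hd' : (0:ℝ) < d := Nat.cast_pos.mpr hd
  set c : ℝ := 1/((n:ℝ)*d) * S with hc
  have hc0 : 0 < c := by positivity
  have hu : 0 < c / C := by positivity
  have hu1 : c / C ≠ 1 := by
    intro h
    apply hne
    field_simp at h
    linarith
  have hlog := Real.log_lt_sub_one_of_pos hu hu1
  rw [Real.log_div hc0.ne' hC.ne'] at hlog
  have hSc : S = c * ((n:ℝ)*d) := by rw [hc]; field_simp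
  have hval : (1 / (2 * (n:ℝ) * C)) * S = (d:ℝ) * c / (2*C) := by
    rw [hSc]; field_simp
  rw [hval]
  have h2 : ((d:ℝ)/2) * (Real.log c - Real.log C) < ((d:ℝ)/2) * (c/C - 1) := by
    apply mul_lt_mul_of_pos_left hlog (by positivity)
  have h3 : ((d:ℝ)/2) * (c/C - 1) = (d:ℝ) * c / (2*C) - (d:ℝ)/2 := by
    field_simp
  linarith [h3.le, h3.symm.le]

/-- Joint minimization of `F(x,C) = (d/2)·log C + (1/(2nC))·∑ gᵢ(x)` over `X × (0,∞)`:
a minimizer of `∑ gᵢ` together with `C₀ = (1/(nd))·∑ gᵢ(x₀)` is a global minimizer of `F`,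
and conversely. -/
theorem stmt1 {X : Type*} [Nonempty X] (n d : ℕ) (hn : 0 < n) (hd : 0 < d)
    (g : Fin n → X → ℝ) (hg : ∀ i x, 0 ≤ g i x) (hpos : ∀ x, 0 < ∑ i, g i x) :
    let F : X → ℝ → ℝ :=
      fun x C => ((d : ℝ) / 2) * Real.log C + (1 / (2 * n * C)) * ∑ i, g i x
    (∀ x₀ : X, (∀ x, ∑ i, g i x₀ ≤ ∑ i, g i x) →
       (0 < (1 / ((n : ℝ) * d)) * ∑ i, g i x₀) ∧
       ∀ x : X, ∀ C : ℝ, 0 < C → F x₀ ((1 / ((n : ℝ) * d)) * ∑ i, g i x₀) ≤ F x C) ∧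
    (∀ x₁ : X, ∀ C₁ : ℝ, 0 < C₁ → (∀ x : X, ∀ C : ℝ, 0 < C → F x₁ C₁ ≤ F x C) →
       (∀ x, ∑ i, g i x₁ ≤ ∑ i, g i x) ∧ C₁ = (1 / ((n : ℝ) * d)) * ∑ i, g i x₁) := by
  intro F
  have hn' : (0:ℝ) < n := Nat.cast_pos.mpr hn
  have hd' : (0:ℝ) < d := Nat.cast_pos.mpr hd
  have Fval : ∀ x : X, F x (1/((n:ℝ)*d) * ∑ i, g i x)
      = ((d:ℝ)/2) * Real.log (1/((n:ℝ)*d) * ∑ i, g i x) + (d:ℝ)/2 := by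
    intro x
    show _ + _ = _
    rw [val_lem n d hn hd (hpos x)]
  constructor
  · intro x₀ hx₀
    have hS₀ := hpos x₀
    refine ⟨mul_pos (by positivity) hS₀, ?_⟩
    intro x C hC
    have h1 : F x₀ (1/((n:ℝ)*d) * ∑ i, g i x₀) ≤ F x (1/((n:ℝ)*d) * ∑ i, g i x) := by
      rw [Fval x₀, Fval x]
      have hle : (1/((n:ℝ)*d) * ∑ i, g i x₀) ≤ (1/((n:ℝ)*d) * ∑ i, g i x) := by
        apply mul_le_mul_of_nonneg_left (hx₀ x) (by positivity)
      have hl := Real.log_le_log (by positivity) hle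
      have := mul_le_mul_of_nonneg_left hl (show (0:ℝ) ≤ (d:ℝ)/2 by positivity)
      linarith
    have h2 : F x (1/((n:ℝ)*d) * ∑ i, g i x) ≤ F x C := by
      rw [Fval x]
      exact key_lem n d hn hd (hpos x) hC
    linarith
  · intro x₁ C₁ hC₁ hmin
    have hS₁ := hpos x₁
    have hc₁0 : 0 < 1/((n:ℝ)*d) * ∑ i, g i x₁ := mul_pos (by positivity) hS₁
    have hCeq : C₁ = 1/((n:ℝ)*d) * ∑ i, g i x₁ := by
      by_contra hne
      have hlt : F x₁ (1/((n:ℝ)*d) * ∑ i, g i x₁) < F x₁ C₁ := by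
        rw [Fval x₁]
        exact key_lem_strict n d hn hd hS₁ hC₁ hne
      have := hmin x₁ _ hc₁0
      linarith
    refine ⟨?_, hCeq⟩
    intro x
    have h1 := hmin x (1/((n:ℝ)*d) * ∑ i, g i x) (mul_pos (by positivity) (hpos x))
    rw [hCeq, Fval x₁, Fval x] at h1
    have hlog : Real.log (1/((n:ℝ)*d) * ∑ i, g i x₁) ≤ Real.log (1/((n:ℝ)*d) * ∑ i, g i x) := by
      nlinarith
    have hle := (Real.log_le_log_iff (mul_pos (by positivity) hS₁) (mul_pos (by positivity) (hpos x))).mp hlog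
    have h2 : (0:ℝ) < 1/((n:ℝ)*d) := by positivity
    nlinarith
end

section
/- Let c > 0, κ ∈ ℝ, and λ_1 ≥ λ_2 > 0, and let θ, h : ℝ → ℝ be differentiable functions satisfying θ'(t) = c²·κ·h(t) and h'(t) = −((λ_1² − λ_2²)/2)·sin(2θ(t)) for all t. Define v_1(t) = c·λ_1·cos(θ(t)), v_2(t) = c·λ_2·sin(θ(t)), and χ(t) = (c²/(λ_1 λ_2))·h(t). Then for all t: v_1'(t) = −κ·λ_1²·χ(t)·v_2(t), v_2'(t) = κ·λ_2²·χ(t)·v_1(t), and χ'(t) = ((λ_2² − λ_1²)/(λ_1² λ_2²))·v_1(t)·v_2(t). -/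
/-- Coordinate form of the most probable path equations on a surface: the substitution
`v₁ = c·λ₁·cos θ`, `v₂ = c·λ₂·sin θ`, `χ = (c²/(λ₁λ₂))·h` transforms the system
`θ' = c²·κ·h`, `h' = −((λ₁²−λ₂²)/2)·sin 2θ` into the eigenframe MPP equations. -/
theorem stmt14 (c κ lam1 lam2 : ℝ) (hc : 0 < c) (hl : lam1 ≥ lam2) (hl2 : 0 < lam2)
    (θ h : ℝ → ℝ)
    (hθ : ∀ t, HasDerivAt θ (c ^ 2 * κ * h t) t)
    (hh : ∀ t, HasDerivAt h (-((lam1 ^ 2 - lam2 ^ 2) / 2) * Real.sin (2 * θ t)) t) :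
    let v1 : ℝ → ℝ := fun t => c * lam1 * Real.cos (θ t)
    let v2 : ℝ → ℝ := fun t => c * lam2 * Real.sin (θ t)
    let χ : ℝ → ℝ := fun t => (c ^ 2 / (lam1 * lam2)) * h t
    ∀ t : ℝ,
      HasDerivAt v1 (-(κ * lam1 ^ 2 * χ t * v2 t)) t ∧
      HasDerivAt v2 (κ * lam2 ^ 2 * χ t * v1 t) t ∧
      HasDerivAt χ ((lam2 ^ 2 - lam1 ^ 2) / (lam1 ^ 2 * lam2 ^ 2) * (v1 t * v2 t)) t := by
  intro v1 v2 χ t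
  have h1 : lam1 ≠ 0 := ne_of_gt (lt_of_lt_of_le hl2 hl)
  have h2 : lam2 ≠ 0 := ne_of_gt hl2
  refine ⟨?_, ?_, ?_⟩
  · have := (((hθ t).cos).const_mul (c * lam1))
    refine this.congr_deriv ?_
    simp only [v2, χ]
    field_simp
  · have := (((hθ t).sin).const_mul (c * lam2))
    refine this.congr_deriv ?_
    simp only [v1, χ]
    field_simp
  · have := ((hh t).const_mul (c ^ 2 / (lam1 * lam2)))
    refine this.congr_deriv ?_
    simp only [v1, v2, Real.sin_two_mul]
    field_simp
    ring
end
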